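/- Lower limit of function values under vanishing SAA errors (deterministic core of the first part of Theorem 2): let f : E → ℝ be bounded below on Ω with f* = inf_{y ∈ Ω} f(y). For each k ≥ 1 let f_k : E → ℝ be convex. Let (x_k)_{k≥1} be a sequence with x_1 ∈ Ω and, for every k ≥ 1, x_{k+1} = P(x_k − α_k·ζ_k·q_k⁻¹·g_k), where g_k is a subgradient of f_k at x_k with ‖g_k‖ ≤ L, q_k = max(1, ‖g_k‖), ζ̲ ≤ ζ_k ≤ ζ̄, and 1/k ≤ α_k ≤ C₂/k. Suppose the approximation errors vanish: lim_{k→∞} |f_k(x_k) − f(x_k)| = 0 and, for every y ∈ Ω, lim_{k→∞} |f_k(y) − f(y)| = 0. Then liminf_{k→∞} f(x_k) = f*. -/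

import Mathlib

open scoped RealInnerProductSpace

/-- Lower limit of function values under vanishing SAA errors. -/
theorem stmt_9 {E : Type*} [NormedAddCommGroup E] [InnerProductSpace ℝ E]
    (Ω : Set E) (hΩne : Ω.Nonempty) (hΩconv : Convex ℝ Ω)
    (P : E → E)
    (hPnonexp : ∀ u v : E, ‖P u - P v‖ ≤ ‖u - v‖)
    (hPmem : ∀ u : E, P u ∈ Ω)
    (hPfix : ∀ y ∈ Ω, P y = y)
    (C₂ ζlow ζbar L : ℝ) (hC₂ : 0 < C₂) (hζlow : 0 < ζlow) (hζord : ζlow ≤ ζbar)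
    (hL : 0 < L)
    (f : E → ℝ) (fstar : ℝ) (hfstar : IsGLB (f '' Ω) fstar)
    (fk : ℕ → E → ℝ) (hfk : ∀ k : ℕ, 1 ≤ k → ConvexOn ℝ Set.univ (fk k))
    (x g : ℕ → E) (α ζ : ℕ → ℝ)
    (hx1 : x 1 ∈ Ω)
    (hg : ∀ k : ℕ, 1 ≤ k → ∀ y : E, fk k (x k) + ⟪g k, y - x k⟫ ≤ fk k y)
    (hgL : ∀ k : ℕ, 1 ≤ k → ‖g k‖ ≤ L)
    (hζ : ∀ k : ℕ, 1 ≤ k → ζlow ≤ ζ k ∧ ζ k ≤ ζbar)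
    (hα : ∀ k : ℕ, 1 ≤ k → 1 / (k : ℝ) ≤ α k ∧ α k ≤ C₂ / k)
    (hupd : ∀ k : ℕ, 1 ≤ k →
      x (k + 1) = P (x k - (α k * ζ k * (max 1 ‖g k‖)⁻¹) • g k))
    (herr1 : Filter.Tendsto (fun k => |fk k (x k) - f (x k)|) Filter.atTop (nhds 0))
    (herr2 : ∀ y ∈ Ω,
      Filter.Tendsto (fun k => |fk k y - f y|) Filter.atTop (nhds 0)) :
    Filter.liminf (fun k => f (x k)) Filter.atTop = fstar := by
  classical
  set γ : ℕ → ℝ := fun k => α k * ζ k * (max 1 ‖g k‖)⁻¹ with hγdef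
  -- membership of iterates
  have hxΩ : ∀ k : ℕ, 1 ≤ k → x k ∈ Ω := by
    intro k hk
    induction k with
    | zero => omega
    | succ n ih =>
      rcases Nat.eq_zero_or_pos n with h | h
      · subst h; exact hx1
      · rw [hupd n h]; exact hPmem _
  -- bounds on the step size γ
  have hqpos : ∀ k : ℕ, (0:ℝ) < max 1 ‖g k‖ := fun k =>
    lt_of_lt_of_le one_pos (le_max_left _ _)
  have hγpos : ∀ k : ℕ, 1 ≤ k → 0 < γ k := by
    intro k hk
    have hk' : (0:ℝ) < k := by exact_mod_cast hk
    have h1 : 0 < α k := lt_of_lt_of_le (by positivity) (hα k hk).1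
    have h2 : 0 < ζ k := lt_of_lt_of_le hζlow (hζ k hk).1
    have h3 : 0 < (max 1 ‖g k‖)⁻¹ := inv_pos.2 (hqpos k)
    positivity
  have hγub : ∀ k : ℕ, 1 ≤ k → γ k ≤ C₂ * ζbar / k := by
    intro k hk
    have hk' : (0:ℝ) < k := by exact_mod_cast hk
    have h1 : 0 < α k := lt_of_lt_of_le (by positivity) (hα k hk).1
    have h2 : 0 < ζ k := lt_of_lt_of_le hζlow (hζ k hk).1
    have h3 : (max 1 ‖g k‖)⁻¹ ≤ 1 := by
      rw [inv_le_one_iff₀]; right; exact le_max_left _ _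
    have h4 : α k ≤ C₂ / k := (hα k hk).2
    have h5 : ζ k ≤ ζbar := (hζ k hk).2
    have h6 : α k * ζ k * (max 1 ‖g k‖)⁻¹ ≤ α k * ζ k :=
      mul_le_of_le_one_right (mul_pos h1 h2).le h3
    have h7 : α k * ζ k ≤ (C₂ / k) * ζbar := by nlinarith
    calc γ k ≤ α k * ζ k := h6
      _ ≤ (C₂ / k) * ζbar := h7
      _ = C₂ * ζbar / k := by ring
  have hγlb : ∀ k : ℕ, 1 ≤ k → ζlow * (max 1 L)⁻¹ / k ≤ γ k := by
    intro k hk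
    have hk' : (0:ℝ) < k := by exact_mod_cast hk
    have h1 : 1 / (k:ℝ) ≤ α k := (hα k hk).1
    have h2 : ζlow ≤ ζ k := (hζ k hk).1
    have hmaxL : 0 < max 1 L := lt_of_lt_of_le one_pos (le_max_left _ _)
    have h3 : (max 1 L)⁻¹ ≤ (max 1 ‖g k‖)⁻¹ := by
      apply inv_anti₀ (hqpos k)
      exact max_le_max le_rfl (hgL k hk)
    have h4 : 0 < (max 1 L)⁻¹ := inv_pos.2 hmaxL
    have h5 : 0 < α k := lt_of_lt_of_le (by positivity) h1
    have h6 : 0 < ζ k := lt_of_lt_of_le hζlow h2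
    have : (1 / (k:ℝ)) * ζlow * (max 1 L)⁻¹ ≤ α k * ζ k * (max 1 ‖g k‖)⁻¹ := by
      have hA : (1 / (k:ℝ)) * ζlow ≤ α k * ζ k := by nlinarith
      have hB : 0 ≤ (1 / (k:ℝ)) * ζlow := by positivity
      nlinarith [inv_pos.2 (hqpos k)]
    calc ζlow * (max 1 L)⁻¹ / k = (1 / (k:ℝ)) * ζlow * (max 1 L)⁻¹ := by ring
      _ ≤ γ k := this
  -- the key descent inequality
  have key : ∀ y ∈ Ω, ∀ k : ℕ, 1 ≤ k →
      ‖x (k+1) - y‖^2 ≤ ‖x k - y‖^2 - 2 * γ k * (fk k (x k) - fk k y)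
        + γ k^2 * L^2 := by
    intro y hy k hk
    have h1 : ‖x (k+1) - y‖ ≤ ‖(x k - y) - γ k • g k‖ := by
      rw [hupd k hk]
      calc ‖P (x k - (α k * ζ k * (max 1 ‖g k‖)⁻¹) • g k) - y‖
          = ‖P (x k - γ k • g k) - P y‖ := by rw [hPfix y hy]
        _ ≤ ‖(x k - γ k • g k) - y‖ := hPnonexp _ _
        _ = ‖(x k - y) - γ k • g k‖ := by rw [sub_right_comm]
    have h2 : ‖x (k+1) - y‖^2 ≤ ‖(x k - y) - γ k • g k‖^2 :=
      pow_le_pow_left₀ (norm_nonneg _) h1 2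
    have h3 : ‖(x k - y) - γ k • g k‖^2
        = ‖x k - y‖^2 - 2 * (γ k * ⟪g k, x k - y⟫) + γ k^2 * ‖g k‖^2 := by
      rw [@norm_sub_sq_real E _ _ (x k - y) (γ k • g k), real_inner_smul_right,
        norm_smul, real_inner_comm]
      simp only [mul_pow, Real.norm_eq_abs, sq_abs]
    have h4 : fk k (x k) - fk k y ≤ ⟪g k, x k - y⟫ := by
      have h5 := hg k hk y
      have h6 : ⟪g k, y - x k⟫ = -⟪g k, x k - y⟫ := by
        rw [show y - x k = -(x k - y) by abel, inner_neg_right]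
      linarith
    have h7 : ‖g k‖^2 ≤ L^2 := pow_le_pow_left₀ (norm_nonneg _) (hgL k hk) 2
    have hγp := (hγpos k hk).le
    nlinarith [h2, h3, h4, h7, sq_nonneg (γ k)]
  -- main step: no a > fstar is an eventual lower bound of f (x k)
  have main : ∀ a : ℝ, fstar < a → ¬ (∀ᶠ k in Filter.atTop, a ≤ f (x k)) := by
    intro a ha hev
    set ε : ℝ := (a - fstar) / 2 with hεdef
    have hε : 0 < ε := by rw [hεdef]; linarith
    have hy' : ∃ z ∈ f '' Ω, z < fstar + ε := by
      by_contra h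
      push_neg at h
      have := hfstar.2 fun z hz => (h z hz)
      linarith
    obtain ⟨z, ⟨y, hyΩ, rfl⟩, hylt⟩ := hy'
    set ε' : ℝ := ε / 2 with hε'def
    have hε' : 0 < ε' := by rw [hε'def]; linarith
    have e1 : ∀ᶠ k in Filter.atTop, |fk k (x k) - f (x k)| < ε / 4 :=
      herr1.eventually_lt_const (by linarith)
    have e2 : ∀ᶠ k in Filter.atTop, |fk k y - f y| < ε / 4 :=
      (herr2 y hyΩ).eventually_lt_const (by linarith)
    have hto : Filter.Tendsto (fun k : ℕ => C₂ * ζbar / k) Filter.atTop (nhds 0) :=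
      tendsto_const_div_atTop_nhds_zero_nat _
    have hζbar : 0 < ζbar := lt_of_lt_of_le hζlow hζord
    have e3 : ∀ᶠ k : ℕ in Filter.atTop, C₂ * ζbar / (k:ℝ) < ε' / L^2 :=
      hto.eventually_lt_const (by positivity)
    obtain ⟨K, hK⟩ := Filter.eventually_atTop.1
      ((((hev.and e1).and e2).and e3).and (Filter.eventually_ge_atTop 1))
    have hK1 : 1 ≤ K := (hK K le_rfl).2
    have hdiff : ∀ k, K ≤ k → ε' ≤ fk k (x k) - fk k y := by
      intro k hk
      obtain ⟨⟨⟨⟨h1, h2⟩, h3⟩, _⟩, _⟩ := hK k hk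
      have habs1 := abs_lt.1 h2
      have habs2 := abs_lt.1 h3
      rw [hε'def, hεdef] at *
      obtain ⟨ha1, ha2⟩ := habs1
      obtain ⟨hb1, hb2⟩ := habs2
      rw [hεdef] at hylt
      linarith
    have hγsmall : ∀ k, K ≤ k → γ k * L^2 ≤ ε' := by
      intro k hk
      obtain ⟨⟨_, h4⟩, h5⟩ := hK k hk
      have hub := hγub k h5
      have hL2 : 0 < L^2 := by positivity
      have h6 : (C₂ * ζbar / k) * L^2 < ε' := by
        rw [div_lt_div_iff₀ (by positivity : (0:ℝ) < k) hL2] at h4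
        rw [div_mul_eq_mul_div, div_lt_iff₀ (by positivity : (0:ℝ) < (k:ℝ))]
        linarith [h4]
      nlinarith [mul_le_mul_of_nonneg_right hub hL2.le]
    have hrec : ∀ k, K ≤ k → ‖x (k+1) - y‖^2 ≤ ‖x k - y‖^2 - ε' * γ k := by
      intro k hk
      have h5 : 1 ≤ k := (hK k hk).2
      have hkey := key y hyΩ k h5
      have hd := hdiff k hk
      have hs := hγsmall k hk
      have hγp := hγpos k h5
      nlinarith [mul_le_mul_of_nonneg_left hs hγp.le,
        mul_le_mul_of_nonneg_left hd hγp.le]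
    have hsum : ∀ n, K ≤ n →
        ‖x n - y‖^2 + ε' * ∑ i ∈ Finset.Ico K n, γ i ≤ ‖x K - y‖^2 := by
      intro n hn
      induction n, hn using Nat.le_induction with
      | base => simp
      | succ n hn ih =>
        rw [Finset.sum_Ico_succ_top hn, mul_add]
        have := hrec n hn
        linarith
    have hbdd : ∀ n, ∑ i ∈ Finset.Ico K (K + n), γ i ≤ ‖x K - y‖^2 / ε' := by
      intro n
      have h := hsum (K + n) (Nat.le_add_right _ _)
      have hnn : 0 ≤ ‖x (K+n) - y‖^2 := by positivity
      rw [le_div_iff₀ hε']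
      nlinarith
    have hsummable : Summable (fun i : ℕ => γ (K + i)) := by
      apply summable_of_sum_range_le (c := ‖x K - y‖^2 / ε')
      · intro i
        exact (hγpos (K + i) (le_trans hK1 (Nat.le_add_right _ _))).le
      · intro n
        have := hbdd n
        rwa [Finset.sum_Ico_eq_sum_range, Nat.add_sub_cancel_left] at this
    set c : ℝ := ζlow * (max 1 L)⁻¹ with hcdef
    have hmaxL : 0 < max 1 L := lt_of_lt_of_le one_pos (le_max_left _ _)
    have hc : 0 < c := by rw [hcdef]; positivity
    have hsum2 : Summable (fun i : ℕ => c / ((K + i : ℕ) : ℝ)) := by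
      refine Summable.of_nonneg_of_le (fun i => by positivity) (fun i => ?_) hsummable
      exact hγlb (K + i) (le_trans hK1 (Nat.le_add_right _ _))
    have hsum3 : Summable (fun i : ℕ => (1 : ℝ) / ((K + i : ℕ) : ℝ)) := by
      have h := hsum2.mul_left c⁻¹
      refine h.congr fun i => ?_
      rw [← mul_div_assoc, inv_mul_cancel₀ hc.ne']
    have hsum4 : Summable (fun n : ℕ => (1 : ℝ) / (n : ℝ)) := by
      have h : Summable (fun i : ℕ => (1 : ℝ) / ((i + K : ℕ) : ℝ)) :=
        hsum3.congr fun i => by rw [Nat.add_comm K i]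
      exact (summable_nat_add_iff K).1 h
    exact Real.not_summable_one_div_natCast hsum4
  -- conclude
  have hS : {a : ℝ | ∀ᶠ k in Filter.atTop, a ≤ f (x k)} = Set.Iic fstar := by
    ext a
    simp only [Set.mem_setOf_eq, Set.mem_Iic]
    constructor
    · intro h
      by_contra hlt
      push_neg at hlt
      exact main a hlt h
    · intro h
      filter_upwards [Filter.eventually_ge_atTop 1] with k hk
      exact h.trans (hfstar.1 ⟨x k, hxΩ k hk, rfl⟩)
  rw [Filter.liminf_eq, hS, csSup_Iic]
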